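/- Suppose x' (t) = Y(x(t))θ + f₀(x(t)) + g(x(t))u(t), and Y, f₀ are Lipschitz on a compact set C containing the trajectories x(τ) and x̂(τ) for τ ∈ [t−T, t], with ‖u(τ)‖ ≤ ū and ‖θ‖ ≤ θ̄, and g Lipschitz on C. Define Ŷ(t) := ∫_{t−T}^t Y(x̂(τ))dτ and Ĝ(t) := ∫_{t−T}^t (f₀(x̂(τ)) + g(x̂(τ))u(τ))dτ. Then there exists a constant L ≥ 0 (depending only on the Lipschitz constants, T, θ̄, ū) such that ‖x̂(t) − x̂(t−T) − Ŷ(t)θ − Ĝ(t)‖ ≤ L · sup_{σ∈[t−T,t]} ‖x̃(σ)‖, where x̃ = x − x̂. -/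

import Mathlib

open Matrix MeasureTheory intervalIntegral Set

attribute [local instance] Matrix.normedAddCommGroup Matrix.normedSpace

private lemma mulVec_norm_le' {n m : ℕ} (A : Matrix (Fin n) (Fin m) ℝ) (v : Fin m → ℝ) :
    ‖A *ᵥ v‖ ≤ (m : ℝ) * ‖A‖ * ‖v‖ := by
  have h0 : (0:ℝ) ≤ (m:ℝ) * ‖A‖ * ‖v‖ := by positivity
  rw [pi_norm_le_iff_of_nonneg h0]
  intro i
  calc ‖(A *ᵥ v) i‖ = ‖∑ j, A i j * v j‖ := by simp [Matrix.mulVec, dotProduct]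
    _ ≤ ∑ j, ‖A i j * v j‖ := norm_sum_le _ _
    _ ≤ ∑ _j : Fin m, ‖A‖ * ‖v‖ := Finset.sum_le_sum fun j _ => by
        rw [norm_mul]
        exact mul_le_mul A.norm_entry_le_entrywise_sup_norm (norm_le_pi_norm v j)
          (norm_nonneg _) (norm_nonneg _)
    _ = (m:ℝ) * ‖A‖ * ‖v‖ := by simp [mul_assoc]

private noncomputable def mulVecCLM (n m : ℕ) :
    Matrix (Fin n) (Fin m) ℝ →L[ℝ] (Fin m → ℝ) →L[ℝ] (Fin n → ℝ) :=
  LinearMap.toContinuousLinearMap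
    { toFun := fun A => LinearMap.toContinuousLinearMap (Matrix.mulVecLin A)
      map_add' := by intros; ext v; simp [Matrix.add_mulVec]
      map_smul' := by intros; ext v; simp [Matrix.smul_mulVec] }

private lemma aesm_mulVec {n m : ℕ} {a b : ℝ} {G : ℝ → Matrix (Fin n) (Fin m) ℝ}
    (hG : AEStronglyMeasurable G (volume.restrict (Set.uIoc a b)))
    {u : ℝ → Fin m → ℝ} (hu : Measurable u) :
    AEStronglyMeasurable (fun τ => G τ *ᵥ u τ) (volume.restrict (Set.uIoc a b)) := by
  have := (mulVecCLM n m).aestronglyMeasurable_comp₂ hG hu.aestronglyMeasurable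
  exact this

private lemma ii_mulVec {n m : ℕ} {a b : ℝ} (hab : a ≤ b) {G : ℝ → Matrix (Fin n) (Fin m) ℝ}
    (hGc : ContinuousOn G (Set.Icc a b)) {MG : ℝ} (hMG : ∀ τ ∈ Set.Icc a b, ‖G τ‖ ≤ MG)
    {u : ℝ → Fin m → ℝ} (hu : Measurable u) {ub : ℝ}
    (hub : ∀ τ ∈ Set.Icc a b, ‖u τ‖ ≤ ub) :
    IntervalIntegrable (fun τ => G τ *ᵥ u τ) volume a b := by
  have huIoc : Set.uIoc a b = Set.Ioc a b := Set.uIoc_of_le hab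
  have hMG0 : 0 ≤ MG := le_trans (norm_nonneg _) (hMG a ⟨le_refl a, hab⟩)
  have hub0 : 0 ≤ ub := le_trans (norm_nonneg _) (hub a ⟨le_refl a, hab⟩)
  have hGm : AEStronglyMeasurable G (volume.restrict (Set.uIoc a b)) := by
    rw [huIoc]
    haveI : TopologicalSpace.PseudoMetrizableSpace (Matrix (Fin n) (Fin m) ℝ) :=
      inferInstanceAs (TopologicalSpace.PseudoMetrizableSpace (Fin n → Fin m → ℝ))
    exact (hGc.mono Set.Ioc_subset_Icc_self).aestronglyMeasurable measurableSet_Ioc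
  apply IntervalIntegrable.mono_fun' (g := fun _ => (m:ℝ) * MG * ub) intervalIntegrable_const
    (aesm_mulVec hGm hu)
  rw [huIoc]
  refine (ae_restrict_iff' measurableSet_Ioc).2 (Filter.Eventually.of_forall fun τ hτ => ?_)
  have hτ' := Set.Ioc_subset_Icc_self hτ
  calc ‖G τ *ᵥ u τ‖ ≤ (m:ℝ) * ‖G τ‖ * ‖u τ‖ := mulVec_norm_le' _ _
    _ ≤ (m:ℝ) * MG * ub :=
      mul_le_mul (mul_le_mul le_rfl (hMG τ hτ') (norm_nonneg _) (by positivity))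
        (hub τ hτ') (norm_nonneg _) (by positivity)

/-- Lemma 1 of the paper: the residual in the integrated regressor relation is
`O(sup_{σ∈[t−T,t]} ‖x̃(σ)‖)`, with a constant depending only on the Lipschitz
constants, the window length `T`, and the bounds `θ̄`, `ū`. -/
theorem stmt_10 {n p m : ℕ} (C : Set (Fin n → ℝ)) (hCcomp : IsCompact C)
    (Y : (Fin n → ℝ) → Matrix (Fin n) (Fin p) ℝ)
    (f0 : (Fin n → ℝ) → (Fin n → ℝ))
    (g : (Fin n → ℝ) → Matrix (Fin n) (Fin m) ℝ)
    (LY Lf Lg : NNReal)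
    (hY : LipschitzOnWith LY Y C) (hf : LipschitzOnWith Lf f0 C)
    (hg : LipschitzOnWith Lg g C)
    (T θbar ubar : ℝ) (hT : 0 ≤ T) (hθbar : 0 ≤ θbar) (hubar : 0 ≤ ubar) :
    ∃ L : ℝ, 0 ≤ L ∧
      ∀ (x xhat : ℝ → Fin n → ℝ) (u : ℝ → Fin m → ℝ) (θ : Fin p → ℝ) (t : ℝ),
        ‖θ‖ ≤ θbar →
        Measurable u →
        (∀ τ ∈ Set.Icc (t - T) t, ‖u τ‖ ≤ ubar) →
        Continuous xhat →
        (∀ τ ∈ Set.Icc (t - T) t, x τ ∈ C ∧ xhat τ ∈ C) →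
        (∀ τ ∈ Set.Icc (t - T) t,
          HasDerivAt x (Y (x τ) *ᵥ θ + f0 (x τ) + g (x τ) *ᵥ u τ) τ) →
        ‖xhat t - xhat (t - T)
            - ((Matrix.of fun i j => ∫ τ in (t - T)..t, Y (xhat τ) i j) *ᵥ θ)
            - ∫ τ in (t - T)..t, (f0 (xhat τ) + g (xhat τ) *ᵥ u τ)‖ ≤
          L * sSup ((fun σ => ‖x σ - xhat σ‖) '' Set.Icc (t - T) t) := by
  obtain ⟨R, hR⟩ := hCcomp.isBounded.exists_norm_le
  obtain ⟨Mg, hMg⟩ := hCcomp.exists_bound_of_continuousOn hg.continuousOn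
  set K : ℝ := (p:ℝ) * LY * θbar + (Lf:ℝ) + (m:ℝ) * Lg * ubar with hK
  have hK0 : 0 ≤ K := by positivity
  refine ⟨2 + T * K, by positivity, ?_⟩
  intro x xhat u θ t hθ hu hubnd hxhatc hmem hderiv
  set a := t - T with ha
  have htab : a ≤ t := by rw [ha]; linarith
  -- the sup
  set S := sSup ((fun σ => ‖x σ - xhat σ‖) '' Set.Icc a t) with hSdef
  have hbdd : BddAbove ((fun σ => ‖x σ - xhat σ‖) '' Set.Icc a t) := by
    refine ⟨R + R, ?_⟩
    rintro v ⟨σ, hσ, rfl⟩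
    calc ‖x σ - xhat σ‖ ≤ ‖x σ‖ + ‖xhat σ‖ := norm_sub_le _ _
      _ ≤ R + R := add_le_add (hR _ (hmem σ hσ).1) (hR _ (hmem σ hσ).2)
  have hSle : ∀ σ ∈ Set.Icc a t, ‖x σ - xhat σ‖ ≤ S := fun σ hσ =>
    le_csSup hbdd (Set.mem_image_of_mem _ hσ)
  have hS0 : 0 ≤ S := le_trans (norm_nonneg _) (hSle t (Set.right_mem_Icc.2 htab))
  -- continuity facts
  have hxc : ContinuousOn x (Set.Icc a t) := fun τ hτ =>
    ((hderiv τ hτ).continuousAt).continuousWithinAt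
  have hxmaps : Set.MapsTo x (Set.Icc a t) C := fun τ hτ => (hmem τ hτ).1
  have hxhmaps : Set.MapsTo xhat (Set.Icc a t) C := fun τ hτ => (hmem τ hτ).2
  have hYx : ContinuousOn (fun τ => Y (x τ)) (Set.Icc a t) :=
    hY.continuousOn.comp hxc hxmaps
  have hYxh : ContinuousOn (fun τ => Y (xhat τ)) (Set.Icc a t) :=
    hY.continuousOn.comp hxhatc.continuousOn hxhmaps
  have hfx : ContinuousOn (fun τ => f0 (x τ)) (Set.Icc a t) :=
    hf.continuousOn.comp hxc hxmaps
  have hfxh : ContinuousOn (fun τ => f0 (xhat τ)) (Set.Icc a t) :=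
    hf.continuousOn.comp hxhatc.continuousOn hxhmaps
  have hgx : ContinuousOn (fun τ => g (x τ)) (Set.Icc a t) :=
    hg.continuousOn.comp hxc hxmaps
  have hgxh : ContinuousOn (fun τ => g (xhat τ)) (Set.Icc a t) :=
    hg.continuousOn.comp hxhatc.continuousOn hxhmaps
  have huIcc : Set.uIcc a t = Set.Icc a t := Set.uIcc_of_le htab
  have huIoc : Set.uIoc a t = Set.Ioc a t := Set.uIoc_of_le htab
  have hmulθ : Continuous (fun M : Matrix (Fin n) (Fin p) ℝ => M *ᵥ θ) :=
    continuous_id.matrix_mulVec continuous_const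
  -- interval integrabilities
  have hI1 : IntervalIntegrable (fun τ => Y (x τ) *ᵥ θ) volume a t := by
    apply ContinuousOn.intervalIntegrable; rw [huIcc]
    exact hmulθ.comp_continuousOn hYx
  have hI1h : IntervalIntegrable (fun τ => Y (xhat τ) *ᵥ θ) volume a t := by
    apply ContinuousOn.intervalIntegrable; rw [huIcc]
    exact hmulθ.comp_continuousOn hYxh
  have hI2 : IntervalIntegrable (fun τ => f0 (x τ)) volume a t := by
    apply ContinuousOn.intervalIntegrable; rw [huIcc]; exact hfx
  have hI2h : IntervalIntegrable (fun τ => f0 (xhat τ)) volume a t := by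
    apply ContinuousOn.intervalIntegrable; rw [huIcc]; exact hfxh
  have hI3 : IntervalIntegrable (fun τ => g (x τ) *ᵥ u τ) volume a t :=
    ii_mulVec htab hgx (fun τ hτ => hMg _ (hxmaps hτ)) hu hubnd
  have hI3h : IntervalIntegrable (fun τ => g (xhat τ) *ᵥ u τ) volume a t :=
    ii_mulVec htab hgxh (fun τ hτ => hMg _ (hxhmaps hτ)) hu hubnd
  have hIentry : ∀ i j, IntervalIntegrable (fun τ => Y (xhat τ) i j) volume a t := by
    intro i j
    apply ContinuousOn.intervalIntegrable; rw [huIcc]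
    exact (((continuous_apply j).comp (continuous_apply i)).comp_continuousOn hYxh)
  have hIF : IntervalIntegrable
      (fun τ => Y (x τ) *ᵥ θ + f0 (x τ) + g (x τ) *ᵥ u τ) volume a t :=
    (hI1.add hI2).add hI3
  have hI2h3h : IntervalIntegrable (fun τ => f0 (xhat τ) + g (xhat τ) *ᵥ u τ) volume a t :=
    hI2h.add hI3h
  -- FTC
  have hFTC : ∫ τ in a..t, (Y (x τ) *ᵥ θ + f0 (x τ) + g (x τ) *ᵥ u τ) = x t - x a :=
    intervalIntegral.integral_eq_sub_of_hasDerivAt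
      (fun τ hτ => hderiv τ (huIcc ▸ hτ)) hIF
  -- swap matrix integral
  have hswap : (Matrix.of fun i j => ∫ τ in a..t, Y (xhat τ) i j) *ᵥ θ
      = ∫ τ in a..t, Y (xhat τ) *ᵥ θ := by
    funext i
    have heval : (∫ τ in a..t, Y (xhat τ) *ᵥ θ) i
        = ∫ τ in a..t, (Y (xhat τ) *ᵥ θ) i :=
      ((ContinuousLinearMap.proj i : (Fin n → ℝ) →L[ℝ] ℝ).intervalIntegral_comp_comm
        hI1h).symm
    rw [heval]
    simp only [Matrix.mulVec, dotProduct, Matrix.of_apply]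
    rw [show (∑ j : Fin p, (∫ τ in a..t, Y (xhat τ) i j) * θ j)
        = ∑ j : Fin p, ∫ τ in a..t, Y (xhat τ) i j * θ j from
      Finset.sum_congr rfl fun j _ => (intervalIntegral.integral_mul_const _ _).symm]
    exact (intervalIntegral.integral_finset_sum (fun j _ => (hIentry i j).mul_const (θ j))).symm
  -- key algebraic identity
  have hdiff : IntervalIntegrable
      (fun τ => (Y (x τ) - Y (xhat τ)) *ᵥ θ
        + ((f0 (x τ) - f0 (xhat τ)) + (g (x τ) - g (xhat τ)) *ᵥ u τ)) volume a t := by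
    have : (fun τ => (Y (x τ) - Y (xhat τ)) *ᵥ θ
        + ((f0 (x τ) - f0 (xhat τ)) + (g (x τ) - g (xhat τ)) *ᵥ u τ))
        = fun τ => (Y (x τ) *ᵥ θ + f0 (x τ) + g (x τ) *ᵥ u τ)
          - Y (xhat τ) *ᵥ θ - (f0 (xhat τ) + g (xhat τ) *ᵥ u τ) := by
      funext τ; simp [Matrix.sub_mulVec]; abel
    rw [this]
    exact (hIF.sub hI1h).sub hI2h3h
  have hkey : xhat t - xhat a - (∫ τ in a..t, Y (xhat τ) *ᵥ θ)
      - (∫ τ in a..t, (f0 (xhat τ) + g (xhat τ) *ᵥ u τ))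
      = (xhat t - x t) - (xhat a - x a)
        + ∫ τ in a..t, ((Y (x τ) - Y (xhat τ)) *ᵥ θ
          + ((f0 (x τ) - f0 (xhat τ)) + (g (x τ) - g (xhat τ)) *ᵥ u τ)) := by
    have h1 : ∫ τ in a..t, ((Y (x τ) - Y (xhat τ)) *ᵥ θ
          + ((f0 (x τ) - f0 (xhat τ)) + (g (x τ) - g (xhat τ)) *ᵥ u τ))
        = (∫ τ in a..t, (Y (x τ) *ᵥ θ + f0 (x τ) + g (x τ) *ᵥ u τ))
          - (∫ τ in a..t, Y (xhat τ) *ᵥ θ)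
          - (∫ τ in a..t, (f0 (xhat τ) + g (xhat τ) *ᵥ u τ)) := by
      rw [← intervalIntegral.integral_sub hIF hI1h,
        ← intervalIntegral.integral_sub (hIF.sub hI1h) hI2h3h]
      congr 1
      funext τ
      simp [Matrix.sub_mulVec]; abel
    rw [h1, hFTC]
    abel
  -- pointwise bound on the integrand
  have hptwise : ∀ τ ∈ Set.Ioc a t,
      ‖(Y (x τ) - Y (xhat τ)) *ᵥ θ
        + ((f0 (x τ) - f0 (xhat τ)) + (g (x τ) - g (xhat τ)) *ᵥ u τ)‖ ≤ K * S := by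
    intro τ hτ
    have hτ' : τ ∈ Set.Icc a t := Set.Ioc_subset_Icc_self hτ
    have hxS : ‖x τ - xhat τ‖ ≤ S := hSle τ hτ'
    have hYd : ‖Y (x τ) - Y (xhat τ)‖ ≤ (LY:ℝ) * S := by
      have := hY.dist_le_mul _ (hxmaps hτ') _ (hxhmaps hτ')
      rw [dist_eq_norm, dist_eq_norm] at this
      calc ‖Y (x τ) - Y (xhat τ)‖ ≤ (LY:ℝ) * ‖x τ - xhat τ‖ := this
        _ ≤ (LY:ℝ) * S := by gcongr
    have hfd : ‖f0 (x τ) - f0 (xhat τ)‖ ≤ (Lf:ℝ) * S := by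
      have := hf.dist_le_mul _ (hxmaps hτ') _ (hxhmaps hτ')
      rw [dist_eq_norm, dist_eq_norm] at this
      calc ‖f0 (x τ) - f0 (xhat τ)‖ ≤ (Lf:ℝ) * ‖x τ - xhat τ‖ := this
        _ ≤ (Lf:ℝ) * S := by gcongr
    have hgd : ‖g (x τ) - g (xhat τ)‖ ≤ (Lg:ℝ) * S := by
      have := hg.dist_le_mul _ (hxmaps hτ') _ (hxhmaps hτ')
      rw [dist_eq_norm, dist_eq_norm] at this
      calc ‖g (x τ) - g (xhat τ)‖ ≤ (Lg:ℝ) * ‖x τ - xhat τ‖ := this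
        _ ≤ (Lg:ℝ) * S := by gcongr
    have h1 : ‖(Y (x τ) - Y (xhat τ)) *ᵥ θ‖ ≤ (p:ℝ) * ((LY:ℝ) * S) * θbar := by
      calc ‖(Y (x τ) - Y (xhat τ)) *ᵥ θ‖
          ≤ (p:ℝ) * ‖Y (x τ) - Y (xhat τ)‖ * ‖θ‖ := mulVec_norm_le' _ _
        _ ≤ (p:ℝ) * ((LY:ℝ) * S) * θbar :=
            mul_le_mul (mul_le_mul le_rfl hYd (norm_nonneg _) (by positivity)) hθ
              (norm_nonneg _) (by positivity)
    have h3 : ‖(g (x τ) - g (xhat τ)) *ᵥ u τ‖ ≤ (m:ℝ) * ((Lg:ℝ) * S) * ubar := by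
      calc ‖(g (x τ) - g (xhat τ)) *ᵥ u τ‖
          ≤ (m:ℝ) * ‖g (x τ) - g (xhat τ)‖ * ‖u τ‖ := mulVec_norm_le' _ _
        _ ≤ (m:ℝ) * ((Lg:ℝ) * S) * ubar :=
            mul_le_mul (mul_le_mul le_rfl hgd (norm_nonneg _) (by positivity))
              (hubnd τ hτ') (norm_nonneg _) (by positivity)
    calc ‖(Y (x τ) - Y (xhat τ)) *ᵥ θ
          + ((f0 (x τ) - f0 (xhat τ)) + (g (x τ) - g (xhat τ)) *ᵥ u τ)‖
        ≤ ‖(Y (x τ) - Y (xhat τ)) *ᵥ θ‖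
          + (‖f0 (x τ) - f0 (xhat τ)‖ + ‖(g (x τ) - g (xhat τ)) *ᵥ u τ‖) :=
          le_trans (norm_add_le _ _) (by gcongr; exact norm_add_le _ _)
      _ ≤ (p:ℝ) * ((LY:ℝ) * S) * θbar + ((Lf:ℝ) * S + (m:ℝ) * ((Lg:ℝ) * S) * ubar) := by
          gcongr
      _ = K * S := by rw [hK]; ring
  have hInorm : ‖∫ τ in a..t, ((Y (x τ) - Y (xhat τ)) *ᵥ θ
      + ((f0 (x τ) - f0 (xhat τ)) + (g (x τ) - g (xhat τ)) *ᵥ u τ))‖ ≤ K * S * T := by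
    have := intervalIntegral.norm_integral_le_of_norm_le_const
      (C := K * S) (fun τ hτ => hptwise τ (huIoc ▸ hτ))
    calc _ ≤ K * S * |t - a| := this
      _ = K * S * T := by rw [ha]; congr 1; rw [abs_of_nonneg (by linarith)]; ring
  -- conclude
  rw [hswap, hkey]
  have e1 : ‖xhat t - x t‖ ≤ S := by
    rw [norm_sub_rev]; exact hSle t (Set.right_mem_Icc.2 htab)
  have e2 : ‖xhat a - x a‖ ≤ S := by
    rw [norm_sub_rev]; exact hSle a (Set.left_mem_Icc.2 htab)
  have e3 : (2 + T * K) * S = S + S + K * S * T := by ring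
  rw [e3]
  refine le_trans (norm_add_le _ _) ?_
  refine add_le_add (le_trans (norm_sub_le _ _) (add_le_add e1 e2)) hInorm
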